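/- arXiv:1809.03215 — 2 statements merged into one kernel-verified Lean document; each statement's English description precedes it below -/
import Mathlib

section
/- Let q_i > 0 (i = 1,…,F), τ1 > 0, τ2 > 0, Ψ_i ∈ (0, 1], C > 0 with Σ_i Ψ_i > C. Define for ν > 0: p_i°(ν) = (1/τ1)·√(τ2/ν)·√q_i − τ2/τ1, and p_i*(ν) = min{Ψ_i, max{0, p_i°(ν)}}. Suppose ν* > 0 satisfies Σ_i p_i*(ν*) = C. Then p* = (p_1*(ν*), …, p_F*(ν*)) maximizes Σ_i q_i·p_i/(τ1·p_i + τ2) subject to Σ_i p_i ≤ C and 0 ≤ p_i ≤ Ψ_i for all i. -/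
set_option maxHeartbeats 1000000 in
lemma key_tangent (q Ψ τ1 τ2 νs a b : ℝ) (hq : 0 < q) (hτ1 : 0 < τ1) (hτ2 : 0 < τ2)
    (hνs : 0 < νs) (hΨ : 0 < Ψ) (hb0 : 0 ≤ b) (hbΨ : b ≤ Ψ)
    (ha : a = min Ψ (max 0 ((1 / τ1) * Real.sqrt (τ2 / νs) * Real.sqrt q - τ2 / τ1))) :
    q * b / (τ1 * b + τ2) ≤ q * a / (τ1 * a + τ2) + νs * (b - a) := by
  set s := Real.sqrt (τ2 / νs) * Real.sqrt q with hs
  have hrw : (1 / τ1) * Real.sqrt (τ2 / νs) * Real.sqrt q = (1 / τ1) * s := by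
    rw [hs]; ring
  rw [hrw] at ha
  have hs0 : 0 < s := by
    apply mul_pos <;> exact Real.sqrt_pos.mpr (by positivity)
  have hssq : νs * s ^ 2 = q * τ2 := by
    have h : s ^ 2 = (τ2 / νs) * q := by
      rw [hs, mul_pow, Real.sq_sqrt (by positivity), Real.sq_sqrt hq.le]
    rw [h]; field_simp
  have ha0 : 0 ≤ a := by rw [ha]; exact le_min hΨ.le (le_max_left _ _)
  have haΨ : a ≤ Ψ := by rw [ha]; exact min_le_left _ _
  have hDa : 0 < τ1 * a + τ2 := by positivity
  have hDb : 0 < τ1 * b + τ2 := by positivity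
  -- core inequality: (b - a) * (s^2 - Da * Db) ≤ 0
  have hcore : (b - a) * (s ^ 2 - (τ1 * a + τ2) * (τ1 * b + τ2)) ≤ 0 := by
    rcases le_or_gt Ψ (max 0 ((1 / τ1) * s - τ2 / τ1)) with hcase | hcase
    · -- a = Ψ, and p° ≥ Ψ so s ≥ τ1*Ψ + τ2
      have haΨ' : a = Ψ := by rw [ha]; exact min_eq_left hcase
      have hmax : max 0 ((1 / τ1) * s - τ2 / τ1) = (1 / τ1) * s - τ2 / τ1 := by
        rcases max_cases 0 ((1 / τ1) * s - τ2 / τ1) with ⟨h1, h2⟩ | ⟨h1, h2⟩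
        · exfalso; rw [h1] at hcase; linarith
        · exact h1
      rw [hmax] at hcase
      have hsge : τ1 * Ψ + τ2 ≤ s := by
        have h := mul_le_mul_of_nonneg_left hcase hτ1.le
        have he : τ1 * ((1 / τ1) * s - τ2 / τ1) = s - τ2 := by field_simp
        rw [he] at h; linarith
      have hba : b ≤ a := by rw [haΨ']; exact hbΨ
      have hDab : τ1 * b + τ2 ≤ τ1 * a + τ2 := by nlinarith
      have hDas : τ1 * a + τ2 ≤ s := by rw [haΨ']; exact hsge
      have h2 : (τ1 * a + τ2) * (τ1 * b + τ2) ≤ s ^ 2 := by nlinarith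
      nlinarith [mul_nonneg (sub_nonneg.mpr hba) (sub_nonneg.mpr h2)]
    · -- a = max 0 p°
      have ha' : a = max 0 ((1 / τ1) * s - τ2 / τ1) := by
        rw [ha]; exact min_eq_right hcase.le
      rcases max_cases 0 ((1 / τ1) * s - τ2 / τ1) with ⟨h1, h2⟩ | ⟨h1, h2⟩
      · -- a = 0, p° ≤ 0 so s ≤ τ2
        have ha0' : a = 0 := by rw [ha', h1]
        have hsle : s ≤ τ2 := by
          have h := mul_le_mul_of_nonneg_left h2 hτ1.le
          have he : τ1 * ((1 / τ1) * s - τ2 / τ1) = s - τ2 := by field_simp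
          rw [he] at h; linarith
        have h3 : s ^ 2 ≤ (τ1 * a + τ2) * (τ1 * b + τ2) := by
          rw [ha0']
          nlinarith [mul_nonneg hs0.le (sub_nonneg.mpr hsle),
            mul_nonneg hτ2.le (sub_nonneg.mpr hsle),
            mul_nonneg (mul_nonneg hτ1.le hb0) hτ2.le]
        nlinarith [mul_nonneg hb0 (sub_nonneg.mpr h3), ha0']
      · -- a = p°, so τ1*a + τ2 = s
        have ha'' : a = (1 / τ1) * s - τ2 / τ1 := by rw [ha', h1]
        have hDas : τ1 * a + τ2 = s := by rw [ha'']; field_simp; ring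
        rw [hDas]
        have hid : (b - a) * (s ^ 2 - s * (τ1 * b + τ2))
            = -(s * (τ1 * (b - a) ^ 2)) := by rw [← hDas]; ring
        rw [hid]
        exact neg_nonpos.mpr (by positivity)
  -- convert to the target
  rw [div_add' _ _ _ hDa.ne', div_le_div_iff₀ hDb hDa]
  have h3 : νs * ((b - a) * (s ^ 2 - (τ1 * a + τ2) * (τ1 * b + τ2))) ≤ 0 :=
    mul_nonpos_of_nonneg_of_nonpos hνs.le hcore
  have h4 : νs * ((b - a) * s ^ 2) = q * τ2 * (b - a) := by
    linear_combination (b - a) * hssq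
  have hkey : q * τ2 * (b - a) ≤ νs * (b - a) * ((τ1 * a + τ2) * (τ1 * b + τ2)) := by
    nlinarith [h3, h4]
  nlinarith [hkey]

theorem optimal_content_placement (F : ℕ) (q Ψ : Fin F → ℝ) (τ1 τ2 C νs : ℝ)
    (pstar : Fin F → ℝ)
    (hq : ∀ i, 0 < q i) (hτ1 : 0 < τ1) (hτ2 : 0 < τ2)
    (hΨ : ∀ i, Ψ i ∈ Set.Ioc (0 : ℝ) 1) (hC : 0 < C)
    (hsum : C < ∑ i, Ψ i) (hνs : 0 < νs)
    (hpstar : ∀ i, pstar i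
        = min (Ψ i) (max 0 ((1 / τ1) * Real.sqrt (τ2 / νs) * Real.sqrt (q i) - τ2 / τ1)))
    (hfull : ∑ i, pstar i = C) :
    ∀ p : Fin F → ℝ, (∀ i, 0 ≤ p i ∧ p i ≤ Ψ i) → (∑ i, p i ≤ C) →
      ∑ i, q i * p i / (τ1 * p i + τ2) ≤ ∑ i, q i * pstar i / (τ1 * pstar i + τ2) := by
  intro p hp hpc
  have h1 : ∀ i ∈ Finset.univ, q i * p i / (τ1 * p i + τ2)
      ≤ q i * pstar i / (τ1 * pstar i + τ2) + νs * (p i - pstar i) := by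
    intro i _
    exact key_tangent (q i) (Ψ i) τ1 τ2 νs (pstar i) (p i) (hq i) hτ1 hτ2 hνs
      (hΨ i).1 (hp i).1 (hp i).2 (hpstar i)
  calc ∑ i, q i * p i / (τ1 * p i + τ2)
      ≤ ∑ i, (q i * pstar i / (τ1 * pstar i + τ2) + νs * (p i - pstar i)) :=
        Finset.sum_le_sum h1
    _ = ∑ i, q i * pstar i / (τ1 * pstar i + τ2) + νs * (∑ i, p i - ∑ i, pstar i) := by
        rw [Finset.sum_add_distrib, ← Finset.mul_sum, Finset.sum_sub_distrib]
    _ ≤ ∑ i, q i * pstar i / (τ1 * pstar i + τ2) := by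
        have h : ∑ i, p i - ∑ i, pstar i ≤ 0 := by rw [hfull]; linarith
        nlinarith
end

section
/- Fix q_1 ≥ q_2 ≥ … ≥ q_F > 0, τ1 > 0, τ2 > 0, and caps Ψ_i ∈ (0,1]. If Ψ is constant (Ψ_i = Ψ for all i), then any optimal solution p* of maximizing Σ_i q_i·p_i/(τ1 p_i + τ2) subject to Σ_i p_i ≤ C, 0 ≤ p_i ≤ Ψ_i, satisfies p_1* ≥ p_2* ≥ … ≥ p_F*. -/
lemma key_mid (τ1 τ2 a b qi qj : ℝ) (hτ1 : 0 < τ1) (hτ2 : 0 < τ2)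
    (ha : 0 ≤ a) (hab : a < b) (hqj : 0 < qj) (hq : qj ≤ qi) :
    qi * a / (τ1 * a + τ2) + qj * b / (τ1 * b + τ2)
      < qi * ((a + b) / 2) / (τ1 * ((a + b) / 2) + τ2)
        + qj * ((a + b) / 2) / (τ1 * ((a + b) / 2) + τ2) := by
  have hb : 0 ≤ b := le_of_lt (lt_of_le_of_lt ha hab)
  have hda : 0 < τ1 * a + τ2 := by nlinarith
  have hdb : 0 < τ1 * b + τ2 := by nlinarith
  have hdm : 0 < τ1 * ((a + b) / 2) + τ2 := by nlinarith
  have hAB : a / (τ1 * a + τ2) ≤ b / (τ1 * b + τ2) := by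
    rw [div_le_div_iff₀ hda hdb]; nlinarith
  have hconc : a / (τ1 * a + τ2) + b / (τ1 * b + τ2)
      < 2 * ((a + b) / 2 / (τ1 * ((a + b) / 2) + τ2)) := by
    have hba : 0 < (b - a) ^ 2 := by nlinarith
    have h2m : 2 * ((a + b) / 2 / (τ1 * ((a + b) / 2) + τ2))
        = (a + b) / (τ1 * ((a + b) / 2) + τ2) := by ring
    rw [div_add_div _ _ (ne_of_gt hda) (ne_of_gt hdb), h2m,
      div_lt_div_iff₀ (mul_pos hda hdb) hdm]
    nlinarith [mul_pos (mul_pos hτ1 hτ2) hba]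
  have hqi : 0 < qi := lt_of_lt_of_le hqj hq
  set A := a / (τ1 * a + τ2)
  set B := b / (τ1 * b + τ2)
  set M := (a + b) / 2 / (τ1 * ((a + b) / 2) + τ2)
  have h1 : 0 ≤ (qi - qj) * (B - A) := mul_nonneg (by linarith) (by linarith)
  have h2 : (qi + qj) * (A + B) < (qi + qj) * (2 * M) :=
    mul_lt_mul_of_pos_left hconc (by linarith)
  have e1 : qi * a / (τ1 * a + τ2) = qi * A := by rw [mul_div_assoc]
  have e2 : qj * b / (τ1 * b + τ2) = qj * B := by rw [mul_div_assoc]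
  have e3 : qi * ((a + b) / 2) / (τ1 * ((a + b) / 2) + τ2) = qi * M := by rw [mul_div_assoc]
  have e4 : qj * ((a + b) / 2) / (τ1 * ((a + b) / 2) + τ2) = qj * M := by rw [mul_div_assoc]
  rw [e1, e2, e3, e4]
  nlinarith

theorem optimal_placement_popularity_order (F : ℕ) (q Ψ : Fin F → ℝ) (τ1 τ2 C : ℝ)
    (pstar : Fin F → ℝ)
    (hq : ∀ i, 0 < q i) (hqmono : ∀ i j : Fin F, i ≤ j → q j ≤ q i)
    (hτ1 : 0 < τ1) (hτ2 : 0 < τ2)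
    (hΨ : ∀ i, Ψ i ∈ Set.Ioc (0 : ℝ) 1) (hΨconst : ∀ i j : Fin F, Ψ i = Ψ j)
    (hfeas : (∀ i, 0 ≤ pstar i ∧ pstar i ≤ Ψ i) ∧ ∑ i, pstar i ≤ C)
    (hopt : ∀ p : Fin F → ℝ, (∀ i, 0 ≤ p i ∧ p i ≤ Ψ i) → (∑ i, p i ≤ C) →
      ∑ i, q i * p i / (τ1 * p i + τ2) ≤ ∑ i, q i * pstar i / (τ1 * pstar i + τ2)) :
    ∀ i j : Fin F, i ≤ j → pstar j ≤ pstar i := by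
  intro i j hij
  by_contra hlt
  push_neg at hlt
  have hne : i ≠ j := by rintro rfl; exact lt_irrefl _ hlt
  set a := pstar i with ha_def
  set b := pstar j with hb_def
  set m := (a + b) / 2 with hm_def
  have ha0 : 0 ≤ a := (hfeas.1 i).1
  have hb0 : 0 ≤ b := (hfeas.1 j).1
  have haΨ : a ≤ Ψ i := (hfeas.1 i).2
  have hbΨ : b ≤ Ψ j := (hfeas.1 j).2
  have hm0 : 0 ≤ m := by positivity
  have hmΨi : m ≤ Ψ i := by
    have := hΨconst i j
    simp only [hm_def]; linarith [this ▸ hbΨ]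
  have hmΨj : m ≤ Ψ j := (hΨconst i j) ▸ hmΨi
  set p : Fin F → ℝ := fun k => if k = i then m else if k = j then m else pstar k with hp_def
  have hpfeas : ∀ k, 0 ≤ p k ∧ p k ≤ Ψ k := by
    intro k
    simp only [hp_def]
    by_cases hki : k = i
    · subst hki; simp [hm0, hmΨi]
    · by_cases hkj : k = j
      · subst hkj; simp [hki, hm0, hmΨj]
      · simp [hki, hkj]; exact hfeas.1 k
  have hdecomp : ∀ k, p k = pstar k + (if k = i then m - a else 0) + (if k = j then m - b else 0) := by
    intro k
    simp only [hp_def]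
    by_cases hki : k = i
    · subst hki; simp [hne, ha_def]
    · by_cases hkj : k = j
      · subst hkj; simp [hki, hb_def]
      · simp [hki, hkj]
  have hsum : ∑ k, p k = ∑ k, pstar k := by
    calc ∑ k, p k = ∑ k, (pstar k + (if k = i then m - a else 0) + (if k = j then m - b else 0)) :=
          Finset.sum_congr rfl (fun k _ => hdecomp k)
      _ = ∑ k, pstar k + (m - a) + (m - b) := by
          rw [Finset.sum_add_distrib, Finset.sum_add_distrib]
          simp [Finset.sum_ite_eq']
      _ = ∑ k, pstar k := by simp only [hm_def]; ring
  have hobj : ∑ k, q k * p k / (τ1 * p k + τ2)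
      = ∑ k, q k * pstar k / (τ1 * pstar k + τ2)
        + (q i * m / (τ1 * m + τ2) - q i * a / (τ1 * a + τ2))
        + (q j * m / (τ1 * m + τ2) - q j * b / (τ1 * b + τ2)) := by
    have : ∀ k, q k * p k / (τ1 * p k + τ2)
        = q k * pstar k / (τ1 * pstar k + τ2)
          + (if k = i then q i * m / (τ1 * m + τ2) - q i * a / (τ1 * a + τ2) else 0)
          + (if k = j then q j * m / (τ1 * m + τ2) - q j * b / (τ1 * b + τ2) else 0) := by
      intro k
      simp only [hp_def]
      by_cases hki : k = i
      · subst hki; simp [hne, ha_def]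
      · by_cases hkj : k = j
        · subst hkj; simp [hki, hb_def]
        · simp [hki, hkj]
    rw [Finset.sum_congr rfl (fun k _ => this k), Finset.sum_add_distrib, Finset.sum_add_distrib]
    simp [Finset.sum_ite_eq']
  have hkey := key_mid τ1 τ2 a b (q i) (q j) hτ1 hτ2 ha0 hlt (hq j) (hqmono i j hij)
  have hle := hopt p hpfeas (hsum ▸ hfeas.2)
  rw [hobj] at hle
  simp only [hm_def] at hle hkey
  linarith
end
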